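/- Let L : ℝ^{n₁} × ℝ^{n₂} → ℝ be continuous and invariant under all α-scale transformations, i.e., L(αu, α⁻¹v) = L(u, v) for all α > 0 and all (u, v). Let θ = (θ₁, θ₂) with θ₁ ≠ 0 and θ₂ ≠ 0. Then for every ε > 0, the connected component containing θ of the set {θ' : L(θ') < L(θ) + ε} has infinite Lebesgue measure. -/

import Mathlib

open MeasureTheory

/-- If the loss `L` is continuous and invariant under all `α`-scale
transformations, then for every minimum `θ = (θ₁, θ₂)` with `θ₁ ≠ 0` and
`θ₂ ≠ 0` and every `ε > 0`, the connected component containing `θ` of the set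
`{θ' | L θ' < L θ + ε}` has infinite Lebesgue measure (infinite volume
`ε`-flatness). -/
theorem volume_flatness_infinite (n₁ n₂ : ℕ)
    (L : (Fin n₁ → ℝ) × (Fin n₂ → ℝ) → ℝ) (hcont : Continuous L)
    (hinv : ∀ α : ℝ, 0 < α → ∀ (u : Fin n₁ → ℝ) (v : Fin n₂ → ℝ),
      L (α • u, α⁻¹ • v) = L (u, v))
    (θ₁ : Fin n₁ → ℝ) (θ₂ : Fin n₂ → ℝ) (h₁ : θ₁ ≠ 0) (h₂ : θ₂ ≠ 0)
    (ε : ℝ) (hε : 0 < ε) :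
    volume (connectedComponentIn {θ' | L θ' < L (θ₁, θ₂) + ε} (θ₁, θ₂)) = ⊤ := by
  set θ : (Fin n₁ → ℝ) × (Fin n₂ → ℝ) := (θ₁, θ₂) with hθdef
  set S : Set ((Fin n₁ → ℝ) × (Fin n₂ → ℝ)) := {θ' | L θ' < L θ + ε} with hSdef
  have hSopen : IsOpen S := isOpen_lt hcont continuous_const
  have hθS : θ ∈ S := by simp only [hSdef, Set.mem_setOf_eq]; linarith
  obtain ⟨δ₀, hδ₀, hball₀⟩ := Metric.isOpen_iff.mp hSopen θ hθS
  have hθ₁ : 0 < ‖θ₁‖ := norm_pos_iff.mpr h₁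
  set δ : ℝ := min δ₀ (‖θ₁‖ / 2) with hδdef
  have hδpos : 0 < δ := lt_min hδ₀ (by linarith)
  have hδθ₁ : δ ≤ ‖θ₁‖ / 2 := min_le_right _ _
  have hballS : Metric.ball θ δ ⊆ S :=
    (Metric.ball_subset_ball (min_le_left _ _)).trans hball₀
  -- choose the scaling base β
  obtain ⟨β, hβ0, hmono, hsep⟩ : ∃ β : ℝ, 0 < β ∧
      (∀ k : ℕ, 1 ≤ (β ^ k) ^ n₁ * ((β ^ k)⁻¹) ^ n₂) ∧
      (∀ j k : ℕ, j < k → 3 * β ^ j ≤ β ^ k ∨ 3 * β ^ k ≤ β ^ j) := by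
    rcases le_or_gt n₂ n₁ with h | h
    · refine ⟨4, by norm_num, fun k => ?_, fun j k hjk => Or.inl ?_⟩
      · have h1 : (1:ℝ) ≤ 4 ^ k := one_le_pow₀ (by norm_num)
        have h2 : ((4:ℝ) ^ k) ^ n₂ ≤ ((4:ℝ) ^ k) ^ n₁ := pow_le_pow_right₀ h1 h
        have hp : (0:ℝ) < ((4:ℝ) ^ k) ^ n₂ := by positivity
        rw [inv_pow, ← div_eq_mul_inv, le_div_iff₀ hp, one_mul]
        exact h2
      · have h1 : (4:ℝ) ^ (j + 1) ≤ 4 ^ k := pow_le_pow_right₀ (by norm_num) hjk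
        have h2 : (0:ℝ) < 4 ^ j := by positivity
        calc (3:ℝ) * 4 ^ j ≤ 4 * 4 ^ j := by linarith
          _ = 4 ^ (j + 1) := by ring
          _ ≤ 4 ^ k := h1
    · refine ⟨4⁻¹, by norm_num, fun k => ?_, fun j k hjk => Or.inr ?_⟩
      · have h1 : (1:ℝ) ≤ 4 ^ k := one_le_pow₀ (by norm_num)
        have h2 : ((4:ℝ) ^ k) ^ n₁ ≤ ((4:ℝ) ^ k) ^ n₂ := pow_le_pow_right₀ h1 h.le
        have hp : (0:ℝ) < ((4:ℝ) ^ k) ^ n₁ := by positivity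
        simp only [inv_pow, inv_inv]
        rw [inv_mul_eq_div, le_div_iff₀ hp, one_mul]
        exact h2
      · have h1 : (4:ℝ) ^ (j + 1) ≤ 4 ^ k := pow_le_pow_right₀ (by norm_num) hjk
        have h2 : (0:ℝ) < 4 ^ j := by positivity
        have h3 : (0:ℝ) < 4 ^ k := by positivity
        have key : (3:ℝ) * 4 ^ j ≤ 4 ^ k := by
          calc (3:ℝ) * 4 ^ j ≤ 4 * 4 ^ j := by linarith
            _ = 4 ^ (j + 1) := by ring
            _ ≤ 4 ^ k := h1
        rw [inv_pow, inv_pow]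
        rw [inv_eq_one_div, inv_eq_one_div, mul_one_div, div_le_div_iff₀ h3 h2]
        linarith
  have hβk : ∀ k : ℕ, (0:ℝ) < β ^ k := fun k => pow_pos hβ0 k
  -- the connected scaling tube
  set f : ℝ × ((Fin n₁ → ℝ) × (Fin n₂ → ℝ)) → (Fin n₁ → ℝ) × (Fin n₂ → ℝ) :=
    fun p => (p.1 • p.2.1, p.1⁻¹ • p.2.2) with hfdef
  set K : Set (ℝ × ((Fin n₁ → ℝ) × (Fin n₂ → ℝ))) := Set.Ioi 0 ×ˢ Metric.ball θ δ with hKdef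
  have hKconn : IsConnected K :=
    isConnected_Ioi.prod ⟨⟨θ, Metric.mem_ball_self hδpos⟩, (convex_ball θ δ).isPreconnected⟩
  have hfc : ContinuousOn f K := by
    apply ContinuousOn.prodMk
    · exact (continuous_fst.smul (continuous_fst.comp continuous_snd)).continuousOn
    · refine ContinuousOn.smul (f := fun x : ℝ × ((Fin n₁ → ℝ) × (Fin n₂ → ℝ)) => x.1⁻¹)
        (g := fun x : ℝ × ((Fin n₁ → ℝ) × (Fin n₂ → ℝ)) => x.2.2) ?_ ?_
      · exact ContinuousOn.inv₀ continuous_fst.continuousOn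
          (fun x hx => ne_of_gt (Set.mem_prod.mp hx).1)
      · exact (continuous_snd.comp continuous_snd).continuousOn
  set U : Set ((Fin n₁ → ℝ) × (Fin n₂ → ℝ)) := f '' K with hUdef
  have hUconn : IsConnected U := hKconn.image f hfc
  have hθU : θ ∈ U := by
    refine ⟨(1, θ), ⟨Set.mem_Ioi.mpr one_pos, Metric.mem_ball_self hδpos⟩, ?_⟩
    simp [hfdef, hθdef]
  have hUS : U ⊆ S := by
    rintro x ⟨⟨α, u, v⟩, ⟨hα, huv⟩, rfl⟩
    have hα' : (0:ℝ) < α := hα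
    show L (α • u, α⁻¹ • v) < L θ + ε
    rw [hinv α hα' u v]
    exact hballS huv
  have hUC : U ⊆ connectedComponentIn S θ :=
    hUconn.isPreconnected.subset_connectedComponentIn hθU hUS
  -- the disjoint family of boxes inside U
  set V : ℕ → Set ((Fin n₁ → ℝ) × (Fin n₂ → ℝ)) := fun k =>
    Metric.ball (β ^ k • θ₁) (β ^ k * δ) ×ˢ Metric.ball ((β ^ k)⁻¹ • θ₂) ((β ^ k)⁻¹ * δ)
    with hVdef
  have hVU : ∀ k, V k ⊆ U := by
    intro k x hx
    obtain ⟨hx1, hx2⟩ := hx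
    have hbk := hβk k
    have hbk' : (β ^ k : ℝ) ≠ 0 := hbk.ne'
    refine ⟨(β ^ k, ((β ^ k)⁻¹ • x.1, β ^ k • x.2)), ⟨hbk, ?_⟩, ?_⟩
    · rw [hθdef, ← ball_prod_same]
      constructor
      · show ((β ^ k)⁻¹ • x.1) ∈ Metric.ball θ₁ δ
        rw [Metric.mem_ball]
        have e : (β ^ k)⁻¹ • (β ^ k • θ₁) = θ₁ := inv_smul_smul₀ hbk' θ₁
        have e2 := dist_smul₀ ((β ^ k)⁻¹) x.1 (β ^ k • θ₁)
        rw [e] at e2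
        calc dist ((β ^ k)⁻¹ • x.1) θ₁
            = ‖(β ^ k)⁻¹‖ * dist x.1 (β ^ k • θ₁) := e2
          _ < ‖(β ^ k)⁻¹‖ * (β ^ k * δ) := by
              exact mul_lt_mul_of_pos_left (Metric.mem_ball.mp hx1)
                (by rw [Real.norm_eq_abs, abs_of_pos (inv_pos.mpr hbk)]; positivity)
          _ = δ := by
              rw [Real.norm_eq_abs, abs_of_pos (inv_pos.mpr hbk)]
              field_simp
      · show (β ^ k • x.2) ∈ Metric.ball θ₂ δ
        rw [Metric.mem_ball]
        have e : β ^ k • ((β ^ k)⁻¹ • θ₂) = θ₂ := smul_inv_smul₀ hbk' θ₂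
        have e2 := dist_smul₀ (β ^ k) x.2 ((β ^ k)⁻¹ • θ₂)
        rw [e] at e2
        calc dist (β ^ k • x.2) θ₂
            = ‖(β ^ k : ℝ)‖ * dist x.2 ((β ^ k)⁻¹ • θ₂) := e2
          _ < ‖(β ^ k : ℝ)‖ * ((β ^ k)⁻¹ * δ) := by
              exact mul_lt_mul_of_pos_left (Metric.mem_ball.mp hx2)
                (by rw [Real.norm_eq_abs, abs_of_pos hbk]; positivity)
          _ = δ := by
              rw [Real.norm_eq_abs, abs_of_pos hbk]
              field_simp
    · show (β ^ k • (β ^ k)⁻¹ • x.1, (β ^ k)⁻¹ • β ^ k • x.2) = x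
      rw [smul_inv_smul₀ hbk', inv_smul_smul₀ hbk']
  -- pairwise disjointness of the boxes
  have hVdisj : Pairwise (Function.onFun Disjoint V) := by
    have main : ∀ j k : ℕ, 3 * β ^ j ≤ β ^ k → Disjoint (V j) (V k) := by
      intro j k h3
      rw [Set.disjoint_left]
      rintro ⟨u, v⟩ ⟨hju, hjv⟩ ⟨hku, hkv⟩
      have bj := hβk j
      have bk := hβk k
      have dj : dist u (β ^ j • θ₁) < β ^ j * δ := Metric.mem_ball.mp hju
      have dk : dist u (β ^ k • θ₁) < β ^ k * δ := Metric.mem_ball.mp hku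
      have hd : dist (β ^ j • θ₁) (β ^ k • θ₁) ≤
          dist u (β ^ j • θ₁) + dist u (β ^ k • θ₁) := dist_triangle_left _ _ _
      have he : dist (β ^ j • θ₁) (β ^ k • θ₁) = (β ^ k - β ^ j) * ‖θ₁‖ := by
        rw [dist_eq_norm, ← sub_smul, norm_smul, Real.norm_eq_abs,
          abs_of_nonpos (by linarith), neg_sub]
      rw [he] at hd
      nlinarith
    intro j k hjk
    rcases hjk.lt_or_gt with h | h
    · rcases hsep j k h with h3 | h3
      · exact main j k h3
      · exact (main k j h3).symm
    · rcases hsep k j h with h3 | h3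
      · exact (main k j h3).symm
      · exact main j k h3
  -- measure of each box
  have hmeas : ∀ k, MeasurableSet (V k) := fun k =>
    measurableSet_ball.prod measurableSet_ball
  set c : ENNReal := ENNReal.ofReal ((2 * δ) ^ (n₁ + n₂)) with hcdef
  have hc0 : c ≠ 0 := by
    rw [hcdef, ← ENNReal.ofReal_zero, Ne, ENNReal.ofReal_eq_ofReal_iff (by positivity) le_rfl]
    positivity
  have hvol : ∀ k, c ≤ volume (V k) := by
    intro k
    have hbk := hβk k
    have h1 : (0:ℝ) < β ^ k * δ := by positivity
    have h2 : (0:ℝ) < (β ^ k)⁻¹ * δ := by positivity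
    have hV : volume (V k) = ENNReal.ofReal ((2 * (β ^ k * δ)) ^ n₁)
        * ENNReal.ofReal ((2 * ((β ^ k)⁻¹ * δ)) ^ n₂) := by
      rw [hVdef]
      rw [MeasureTheory.Measure.volume_eq_prod, MeasureTheory.Measure.prod_prod,
        Real.volume_pi_ball _ h1, Real.volume_pi_ball _ h2]
      simp
    rw [hV, ← ENNReal.ofReal_mul (by positivity), hcdef]
    apply ENNReal.ofReal_le_ofReal
    have e : (2 * (β ^ k * δ)) ^ n₁ * (2 * ((β ^ k)⁻¹ * δ)) ^ n₂
        = (2 * δ) ^ (n₁ + n₂) * ((β ^ k) ^ n₁ * ((β ^ k)⁻¹) ^ n₂) := by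
      rw [pow_add]; ring
    rw [e]
    exact le_mul_of_one_le_right (by positivity) (hmono k)
  -- conclusion
  have hsub : (⋃ k, V k) ⊆ connectedComponentIn S θ :=
    Set.iUnion_subset fun k => (hVU k).trans hUC
  have htop : volume (⋃ k, V k) = ⊤ := by
    rw [measure_iUnion hVdisj hmeas]
    refine top_le_iff.mp ?_
    calc (⊤ : ENNReal) = ∑' _ : ℕ, c := (ENNReal.tsum_const_eq_top_of_ne_zero hc0).symm
      _ ≤ ∑' k, volume (V k) := ENNReal.tsum_le_tsum hvol
  exact top_le_iff.mp (htop ▸ measure_mono hsub)
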